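/- Let G be a reductive group (or just: let Φ be a crystallographic root system with Weyl-invariant inner product), let χ be a character of an abelian group receiving compatible maps χ_α from 𝔽_{q^N} for each α ∈ Φ as in the context, and define Φ_χ = {α ∈ Φ : χ_α is trivial}. Assume for all α, β ∈ Φ the length ratios n_{α,β} = (α,α)/(β,β) taking values 2^{±1} or 3^{±1} only occur when p is a torsion prime, and assume p is not a torsion prime (or p > 3). Then Φ_χ is closed under addition: if α, β ∈ Φ_χ and α + β ∈ Φ, then α + β ∈ Φ_χ. -/
import Mathlib


open scoped RealInnerProductSpace

/-- Let `Φ` be a crystallographic root system in a real inner product space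
in which all squared-length ratios lie in `{1, 2, 1/2, 3, 1/3}`, and let `p` be a prime
different from `2` and `3` (i.e. not a torsion prime).  Suppose given, for every `α ∈ Φ`, a
character `χ α : A → G` of an abelian group `A` on which multiplication by any integer prime
to `p` is surjective, subject to the compatibility: whenever `m·γ∨ = a·α∨ + b·β∨` holds among
coroots (`γ∨ = (2/(γ,γ))·γ`), one has `χ γ (m•t) = χ α (a•t) · χ β (b•t)` for all `t`.
Then `Φ_χ = {α : χ α trivial}` is closed under addition: if `χ α` and `χ β` are trivial and
`α + β ∈ Φ`, then `χ (α+β)` is trivial. -/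
theorem stmt_6
    {V : Type*} [NormedAddCommGroup V] [InnerProductSpace ℝ V]
    (Φ : Set V) (hfin : Φ.Finite) (h0 : (0 : V) ∉ Φ)
    (p : ℕ) (hp : p.Prime) (hp2 : p ≠ 2) (hp3 : p ≠ 3)
    (hratio : ∀ α ∈ Φ, ∀ β ∈ Φ, ⟪α, α⟫ / ⟪β, β⟫ ∈ ({1, 2, 1/2, 3, 1/3} : Set ℝ))
    {A G : Type*} [AddCommGroup A] [CommGroup G]
    (hA : ∀ m : ℤ, IsCoprime m (p : ℤ) → Function.Surjective (fun t : A => m • t))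
    (χ : V → A → G)
    (hhom : ∀ α ∈ Φ, ∀ s t : A, χ α (s + t) = χ α s * χ α t)
    (hrel : ∀ α ∈ Φ, ∀ β ∈ Φ, ∀ γ ∈ Φ, ∀ m a b : ℤ,
      (m : ℝ) • ((2 / ⟪γ, γ⟫) • γ) =
          (a : ℝ) • ((2 / ⟪α, α⟫) • α) + (b : ℝ) • ((2 / ⟪β, β⟫) • β) →
      ∀ t : A, χ γ (m • t) = χ α (a • t) * χ β (b • t))
    (α β : V) (hα : α ∈ Φ) (hβ : β ∈ Φ) (hαβ : α + β ∈ Φ)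
    (hχα : ∀ t, χ α t = 1) (hχβ : ∀ t, χ β t = 1) :
    ∀ t, χ (α + β) t = 1 := by
  set γ := α + β with hγdef
  -- nonvanishing of inner products
  have hαne : α ≠ 0 := fun h => h0 (h ▸ hα)
  have hβne : β ≠ 0 := fun h => h0 (h ▸ hβ)
  have hγne : γ ≠ 0 := fun h => h0 (h ▸ hαβ)
  have hα0 : ⟪α, α⟫ ≠ 0 := fun h => hαne (inner_self_eq_zero.mp h)
  have hβ0 : ⟪β, β⟫ ≠ 0 := fun h => hβne (inner_self_eq_zero.mp h)
  have hγ0 : ⟪γ, γ⟫ ≠ 0 := fun h => hγne (inner_self_eq_zero.mp h)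
  -- find integers a, b with (a : ℝ) = 6 * (⟪α,α⟫/⟪γ,γ⟫) etc.
  have hex : ∀ δ : V, δ ∈ Φ → ∃ a : ℤ, (a : ℝ) = 6 * (⟪δ, δ⟫ / ⟪γ, γ⟫) := by
    intro δ hδ
    rcases hratio δ hδ γ hαβ with h | h | h | h | h
    · exact ⟨6, by rw [h]; norm_num⟩
    · exact ⟨12, by rw [h]; norm_num⟩
    · exact ⟨3, by rw [h]; norm_num⟩
    · exact ⟨18, by rw [h]; norm_num⟩
    · exact ⟨2, by rw [h]; norm_num⟩
  obtain ⟨a, ha⟩ := hex α hα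
  obtain ⟨b, hb⟩ := hex β hβ
  -- the coroot relation 6 γ∨ = a α∨ + b β∨
  have hvec : ((6 : ℤ) : ℝ) • ((2 / ⟪γ, γ⟫) • γ) =
      (a : ℝ) • ((2 / ⟪α, α⟫) • α) + (b : ℝ) • ((2 / ⟪β, β⟫) • β) := by
    rw [smul_smul, smul_smul, smul_smul, ha, hb, hγdef, smul_add]
    congr 1
    · congr 1
      field_simp
      ring
    · congr 1
      field_simp
      ring
  have hkey := hrel α hα β hβ γ hαβ 6 a b hvec
  -- 6 is coprime to p
  have hcop : IsCoprime (6 : ℤ) (p : ℤ) := by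
    rw [Int.isCoprime_iff_gcd_eq_one]
    have h6 : ¬ (p ∣ 6) := by
      intro h
      have : p ∣ 2 * 3 := by norm_num at h ⊢; exact h
      rcases (Nat.Prime.dvd_mul hp).mp this with h' | h'
      · exact hp2 ((Nat.prime_dvd_prime_iff_eq hp Nat.prime_two).mp h')
      · exact hp3 ((Nat.prime_dvd_prime_iff_eq hp Nat.prime_three).mp h')
    have : Nat.Coprime 6 p := ((Nat.Prime.coprime_iff_not_dvd hp).mpr h6).symm
    simpa [Int.gcd] using this
  intro s
  obtain ⟨t, ht⟩ := hA 6 hcop s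
  have : χ γ ((6 : ℤ) • t) = 1 := by
    rw [hkey t, hχα, hχβ, one_mul]
  simpa [ht] using this ▸ (by rw [← ht] : χ γ s = χ γ ((6:ℤ) • t))
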